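/- For 1 ≤ m ≤ k and ξ a root of U_{k+1}, the partial derivative of U_{k+1} with respect to the parameter r_m, evaluated at ξ, equals −U_m(ξ)·U_{m−1}(ξ)/U_k(ξ) · ∏_{i=m+1}^{k} r_i. -/

import Mathlib

open Polynomial

noncomputable def U (c r : ℕ → ℝ) : ℕ → Polynomial ℝ
  | 0 => 1
  | 1 => X - C (c 0)
  | (k+2) => (X + C ((-1)^(k+2) * c (k+1))) * U c r (k+1) - C (r (k+1)) * U c r k

lemma Ucongr (c r r' : ℕ → ℝ) : ∀ n, (∀ j, j < n → r' j = r j) → U c r' n = U c r n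
  | 0, _ => rfl
  | 1, _ => rfl
  | (n+2), h => by
    simp only [U]
    rw [Ucongr c r r' (n+1) (fun j hj => h j (by omega)),
        Ucongr c r r' n (fun j hj => h j (by omega)), h (n+1) (by omega)]

lemma Unonzero (c r : ℕ → ℝ) (hr : ∀ k, 1 ≤ k → 0 < r k) (ξ : ℝ) :
    ∀ n, (U c r (n+1)).eval ξ = 0 → (U c r n).eval ξ ≠ 0 := by
  intro n
  induction n with
  | zero => simp [U]
  | succ n ih =>
    intro h1 h2
    have hrec : (U c r (n+2)).eval ξ =
        (ξ + (-1)^(n+2) * c (n+1)) * (U c r (n+1)).eval ξ - r (n+1) * (U c r n).eval ξ := by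
      simp [U]
    rw [h1, h2] at hrec
    have : (U c r n).eval ξ = 0 := by
      have hne := (hr (n+1) (by omega)).ne'
      field_simp at hrec
      exact (mul_eq_zero.mp (by linarith : r (n+1) * (U c r n).eval ξ = 0)).resolve_left hne
    exact ih h2 this

/-- Partial derivative of `U_{k+1}(ξ)` with respect to the parameter `r_m`. -/
theorem stmt15 (c r : ℕ → ℝ) (hr : ∀ k, 1 ≤ k → 0 < r k) (k m : ℕ)
    (hm1 : 1 ≤ m) (hm : m ≤ k)
    (ξ : ℝ) (hξ : (U c r (k+1)).eval ξ = 0) :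
    deriv (fun t : ℝ => (U c (Function.update r m t) (k+1)).eval ξ) (r m) =
      -((U c r m).eval ξ * (U c r (m-1)).eval ξ) / (U c r k).eval ξ *
        ∏ i ∈ Finset.Icc (m+1) k, r i := by
  obtain ⟨m', rfl⟩ : ∃ m', m = m' + 1 := ⟨m - 1, by omega⟩
  set u : ℕ → ℝ := fun n => (U c r n).eval ξ with hu
  set f : ℕ → ℝ → ℝ := fun n t => (U c (Function.update r (m'+1) t) n).eval ξ with hf
  have hfix : ∀ n, n ≤ m' + 1 → ∀ t, f n t = u n := by
    intro n hn t
    simp only [hf, hu]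
    rw [Ucongr c r _ n (fun j hj => Function.update_of_ne (by omega) _ _)]
  have key : ∀ n, m' + 1 ≤ n → ∃ dn dn1, HasDerivAt (f n) dn (r (m'+1)) ∧
      HasDerivAt (f (n+1)) dn1 (r (m'+1)) ∧
      dn1 * u n - dn * u (n+1) =
        -(u (m'+1) * u m') * ∏ i ∈ Finset.Icc (m'+2) n, r i := by
    intro n hn
    induction n, hn using Nat.le_induction with
    | base =>
      refine ⟨0, -(u m'), ?_, ?_, ?_⟩
      · have : f (m'+1) = fun _ => u (m'+1) := funext fun t => hfix _ le_rfl t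
        rw [this]; exact hasDerivAt_const _ _
      · have : f (m'+2) = fun t => (ξ + (-1)^(m'+2) * c (m'+1)) * u (m'+1) - t * u m' := by
          funext t
          simp only [hf]
          simp only [U, eval_sub, eval_mul, eval_add, eval_X, eval_C]
          rw [← hfix (m'+1) le_rfl t, ← hfix m' (by omega) t]
          simp [hf, Function.update_self]
        rw [this]
        have h1 : HasDerivAt (fun t : ℝ => t * u m') (u m') (r (m'+1)) := by
          simpa using (hasDerivAt_id (r (m'+1))).mul_const (u m')
        simpa using (h1.const_sub ((ξ + (-1)^(m'+2) * c (m'+1)) * u (m'+1)))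
      · simp [Finset.Icc_self, Finset.Icc_eq_empty_of_lt (by omega : m'+2 > m'+1)]
        ring
    | succ n hn ih =>
      obtain ⟨dn, dn1, h0, h1, hw⟩ := ih
      refine ⟨dn1, (ξ + (-1)^(n+2) * c (n+1)) * dn1 - r (n+1) * dn, h1, ?_, ?_⟩
      · have : f (n+2) = fun t => (ξ + (-1)^(n+2) * c (n+1)) * f (n+1) t - r (n+1) * f n t := by
          funext t
          simp only [hf]
          simp only [U, eval_sub, eval_mul, eval_add, eval_X, eval_C]
          rw [Function.update_of_ne (by omega) t r]
        rw [this]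
        exact (h1.const_mul _).sub (h0.const_mul _)
      · have hrec : u (n+2) = (ξ + (-1)^(n+2) * c (n+1)) * u (n+1) - r (n+1) * u n := by
          simp [hu, U]
        rw [Finset.prod_Icc_succ_top (by omega : m'+2 ≤ n+1)]
        rw [hrec]
        have : ((ξ + (-1)^(n+2) * c (n+1)) * dn1 - r (n+1) * dn) * u (n+1) -
            dn1 * ((ξ + (-1)^(n+2) * c (n+1)) * u (n+1) - r (n+1) * u n) =
            r (n+1) * (dn1 * u n - dn * u (n+1)) := by ring
        rw [this, hw]; ring
  obtain ⟨dn, dn1, h0, h1, hw⟩ := key k hm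
  rw [h1.deriv]
  have hk : u (k+1) = 0 := hξ
  have hknz : u k ≠ 0 := Unonzero c r hr ξ k hξ
  rw [hk, mul_zero, sub_zero] at hw
  rw [div_mul_eq_mul_div, eq_div_iff hknz]
  show dn1 * u k = -(u (m'+1) * u m') * ∏ i ∈ Finset.Icc (m'+2) k, r i
  rw [hw]
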